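/- The replacement matrix R of p(x) = a₀x^m + a₁x^{m-1} + ⋯ + a_m satisfies the monic integer polynomial identity R^m + a₁R^{m-1} + a₀a₂R^{m-2} + a₀²a₃R^{m-3} + ⋯ + a₀^{m-1}a_m·I = 0. -/

import Mathlib

open Finset Matrix

private def auxF (a : ℕ → ℤ) (m n i j : ℕ) : ℤ :=
  if i < j then
    (if i < n ∧ n + j - i ≤ m then -(a 0 ^ (n - 1) * a (n + j - i)) else 0)
  else
    (if n ≤ i ∧ i ≤ j + n then a 0 ^ (n - 1) * a (n + j - i) else 0)

private lemma auxF_step (a : ℕ → ℤ) (m k i j : ℕ) (him : i < m) (hjm : j < m)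
    (hnm : k + 1 + 1 ≤ m) :
    auxF a m (k + 1 + 1) i j
      = auxF a m (k + 1) i 0 * (-a (j + 1))
        + (if j + 1 < m then auxF a m (k + 1) i (j + 1) * a 0 else 0)
        + (if i = j then a 0 ^ (k + 1) * a (k + 1 + 1) else 0) := by
  simp only [auxF, Nat.add_sub_cancel]
  rw [show k + 1 + 1 + j - i = k + 1 + (j + 1) - i from by omega]
  split_ifs
  all_goals try (exfalso; omega)
  all_goals try ring
  all_goals first
    | (rw [show (1:ℕ) + k - i = 0 from by omega,
           show (2:ℕ) + k + j - i = 1 + j from by omega])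
    | (rw [show (1:ℕ) + k - i = 0 from by omega,
           show (1:ℕ) + j = 2 + k from by omega])
    | (rw [show (2:ℕ) + k + j - i = 2 + k from by omega])
    | (rw [show (2:ℕ) + j + k - i = 2 + k from by omega])
  all_goals try ring


theorem replacement_matrix_monic_identity
    (m : ℕ) (hm : 0 < m) (a : ℕ → ℤ) (ha : a 0 ≠ 0)
    (R : Matrix (Fin m) (Fin m) ℤ)
    (hR : ∀ i j, R i j =
      if (i : ℕ) = 0 then -a ((j : ℕ) + 1)
      else if (i : ℕ) = (j : ℕ) + 1 then a 0 else 0) :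
    R ^ m + ∑ k ∈ Finset.Icc 1 m, ((a 0) ^ (k - 1) * a k) • R ^ (m - k) = 0 := by
  have key : ∀ n, 1 ≤ n → n ≤ m → ∀ i j : Fin m,
      (R ^ n + ∑ k ∈ Finset.Icc 1 n, ((a 0) ^ (k - 1) * a k) • R ^ (n - k)) i j
        = auxF a m n (i : ℕ) (j : ℕ) := by
    intro n hn
    induction n, hn using Nat.le_induction with
    | base =>
      intro _ i j
      simp only [Finset.Icc_self, Finset.sum_singleton, pow_one, Nat.sub_self, pow_zero,
        one_mul, Matrix.add_apply, Matrix.smul_apply, Matrix.one_apply, smul_eq_mul, hR, auxF]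
      split_ifs
      all_goals simp only [Fin.ext_iff] at *
      all_goals try (exfalso; omega)
      all_goals try ring
      all_goals first
        | (rw [show 1 + (j : ℕ) - (i : ℕ) = (j : ℕ) + 1 from by omega])
        | (rw [show 1 + (j : ℕ) - (i : ℕ) = 1 from by omega])
        | (rw [show 1 + (j : ℕ) - (i : ℕ) = 0 from by omega])
        | (rw [show 1 + (j : ℕ) = 1 from by omega])
      all_goals try ring
    | succ n hn ih =>
      intro hnm i j
      have hmat : R ^ (n + 1) + ∑ k ∈ Finset.Icc 1 (n + 1), ((a 0) ^ (k - 1) * a k) • R ^ (n + 1 - k)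
          = (R ^ n + ∑ k ∈ Finset.Icc 1 n, ((a 0) ^ (k - 1) * a k) • R ^ (n - k)) * R
            + ((a 0) ^ n * a (n + 1)) • 1 := by
        have h2 : ∀ k ∈ Finset.Icc 1 n,
            ((a 0) ^ (k - 1) * a k) • R ^ (n - k) * R
              = ((a 0) ^ (k - 1) * a k) • R ^ (n + 1 - k) := by
          intro k hk
          rw [Finset.mem_Icc] at hk
          rw [smul_mul_assoc, ← pow_succ, show n - k + 1 = n + 1 - k from by omega]
        rw [Finset.sum_Icc_succ_top (show 1 ≤ n + 1 by omega), Nat.sub_self, pow_zero,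
          Nat.add_sub_cancel, add_mul, Finset.sum_mul, ← pow_succ,
          Finset.sum_congr rfl h2, add_assoc]
      rw [hmat, Matrix.add_apply, Matrix.mul_apply, Matrix.smul_apply, Matrix.one_apply]
      have hM := ih (by omega) i
      obtain ⟨K, rfl⟩ : ∃ K, n = K + 1 := ⟨n - 1, by omega⟩
      by_cases hj : (j : ℕ) + 1 < m
      · have hsum : ∀ l : Fin m,
            (R ^ (K + 1) + ∑ k ∈ Finset.Icc 1 (K + 1), ((a 0) ^ (k - 1) * a k) • R ^ (K + 1 - k)) i l
              * R l j
            = (if l = (⟨0, by omega⟩ : Fin m) then auxF a m (K + 1) (i : ℕ) 0 * (-a ((j : ℕ) + 1)) else 0)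
              + (if l = (⟨(j : ℕ) + 1, hj⟩ : Fin m) then auxF a m (K + 1) (i : ℕ) ((j : ℕ) + 1) * a 0 else 0) := by
          intro l
          rw [hM l, hR]
          simp only [Fin.ext_iff]
          by_cases h0 : (l : ℕ) = 0
          · simp [h0]
          · by_cases h1 : (l : ℕ) = (j : ℕ) + 1
            · simp [h0, h1]
            · simp [h0, h1]
        rw [Finset.sum_congr rfl (fun l _ => hsum l), Finset.sum_add_distrib,
          Finset.sum_ite_eq' Finset.univ, Finset.sum_ite_eq' Finset.univ]
        simp only [Finset.mem_univ, if_true]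
        rw [auxF_step a m K (i : ℕ) (j : ℕ) i.isLt j.isLt (by omega), if_pos hj]
        simp only [Fin.ext_iff, smul_eq_mul, mul_ite, mul_one, mul_zero]
      · have hjm : (j : ℕ) + 1 = m := by omega
        have hsum : ∀ l : Fin m,
            (R ^ (K + 1) + ∑ k ∈ Finset.Icc 1 (K + 1), ((a 0) ^ (k - 1) * a k) • R ^ (K + 1 - k)) i l
              * R l j
            = (if l = (⟨0, by omega⟩ : Fin m) then auxF a m (K + 1) (i : ℕ) 0 * (-a ((j : ℕ) + 1)) else 0) := by
          intro l
          rw [hM l, hR]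
          simp only [Fin.ext_iff]
          by_cases h0 : (l : ℕ) = 0
          · simp [h0]
          · have h1 : (l : ℕ) ≠ (j : ℕ) + 1 := by have := l.isLt; omega
            simp [h0, h1]
        rw [Finset.sum_congr rfl (fun l _ => hsum l), Finset.sum_ite_eq' Finset.univ]
        simp only [Finset.mem_univ, if_true]
        rw [auxF_step a m K (i : ℕ) (j : ℕ) i.isLt j.isLt (by omega), if_neg hj]
        simp only [Fin.ext_iff, smul_eq_mul, mul_ite, mul_one, mul_zero]
        rw [add_zero]
  have hzero : ∀ i j : Fin m, auxF a m m (i : ℕ) (j : ℕ) = 0 := by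
    intro i j
    have hi := i.isLt
    have hj := j.isLt
    unfold auxF
    split_ifs <;> first | rfl | (exfalso; omega)
  ext i j
  rw [Matrix.zero_apply, key m hm le_rfl i j, hzero]
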